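/- Let n, u₁ ∈ R^d be unit vectors with ⟨u₁,n⟩ ≠ 0, let u₂ = u₁ − 2⟨u₁,n⟩n be the reflection of u₁ through the hyperplane {n}^⊥, and let R : {u₂}^⊥ → {u₁}^⊥ be the restriction to {u₂}^⊥ of the orthogonal reflection v ↦ v − 2⟨v,n⟩n. Then R is a well-defined linear isometry, and R ∘ p_{n,u₂} = p_{n,u₁}, where p_{n,u} : {n}^⊥ → {u}^⊥ denotes the restriction to {n}^⊥ of the orthogonal projection onto {u}^⊥. -/

import Mathlib

/-- The reflection `R v = v − 2⟨v,n⟩n` maps `{u₂}^⊥` into `{u₁}^⊥`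
isometrically (where `u₂ = u₁ − 2⟨u₁,n⟩n`), and `R ∘ p_{n,u₂} = p_{n,u₁}`, i.e. for
`v ⊥ n`, reflecting the projection of `v` onto `{u₂}^⊥` gives the projection onto
`{u₁}^⊥`. -/
theorem stmt_18 (d : ℕ) (n u₁ : EuclideanSpace ℝ (Fin d))
    (hn : ‖n‖ = 1) (hu₁ : ‖u₁‖ = 1) (hun : (inner ℝ u₁ n : ℝ) ≠ 0) :
    let u₂ := u₁ - (2 * (inner ℝ u₁ n : ℝ)) • n
    let R := fun v : EuclideanSpace ℝ (Fin d) => v - (2 * (inner ℝ v n : ℝ)) • n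
    (∀ v : EuclideanSpace ℝ (Fin d), (inner ℝ v u₂ : ℝ) = 0 →
        (inner ℝ (R v) u₁ : ℝ) = 0 ∧ ‖R v‖ = ‖v‖) ∧
      (∀ v : EuclideanSpace ℝ (Fin d), (inner ℝ v n : ℝ) = 0 →
        R (v - (inner ℝ v u₂ : ℝ) • u₂) = v - (inner ℝ v u₁ : ℝ) • u₁) := by
  intro u₂ R
  have hnn : (inner ℝ n n : ℝ) = 1 := by
    rw [real_inner_self_eq_norm_mul_norm, hn]; ring
  constructor
  · intro v hv
    have hv' : (inner ℝ v u₁ : ℝ) = 2 * (inner ℝ u₁ n : ℝ) * (inner ℝ v n : ℝ) := by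
      have h := hv
      simp only [u₂, inner_sub_right, inner_smul_right, sub_eq_zero] at h
      linarith [h]
    constructor
    · simp only [R, inner_sub_left, inner_smul_left, RCLike.conj_to_real]
      rw [hv', real_inner_comm n u₁]
      ring
    · have hsq : ‖R v‖ ^ 2 = ‖v‖ ^ 2 := by
        rw [← real_inner_self_eq_norm_sq, ← real_inner_self_eq_norm_sq]
        simp only [R, inner_sub_left, inner_sub_right, inner_smul_left,
          inner_smul_right, RCLike.conj_to_real, hnn, real_inner_comm n v]
        ring
      nlinarith [norm_nonneg (R v), norm_nonneg v]
  · intro v hv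
    have hvn : (inner ℝ v u₂ : ℝ) = (inner ℝ v u₁ : ℝ) := by
      simp [u₂, inner_sub_right, inner_smul_right, hv]
    have hx : (inner ℝ (v - (inner ℝ v u₁ : ℝ) • (u₁ - (2 * (inner ℝ u₁ n : ℝ)) • n)) n : ℝ)
        = (inner ℝ v u₁ : ℝ) * (inner ℝ u₁ n : ℝ) := by
      simp only [inner_sub_left, inner_smul_left, inner_sub_right,
        inner_smul_right, RCLike.conj_to_real, hv, hnn]
      ring
    simp only [R, hvn, u₂, hx]
    module
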